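/- Lower bound on the number of restrictions of balanced colorings: Let N and C be positive integers with C ∣ N, and let S be a subset of Fin N. Call x : Fin N → Fin C a balanced coloring if every fiber x⁻¹(j) has exactly N/C elements. Then the number of distinct restrictions to S of balanced colorings, multiplied by (N+1)^C, is at least C^{|S|}. Equivalently, the set {x restricted to S : x a balanced coloring} has cardinality at least C^{|S|} / (N+1)^C. -/

import Mathlib

open Finset

private def fib (N C : ℕ) (k : Fin C → ℕ) : Finset (Fin N → Fin C) :=
  univ.filter fun f => ∀ j, (univ.filter fun i => f i = j).card = k j

private lemma card_filter_update {N C : ℕ} (f : Fin N → Fin C) (x : Fin N) (a b : Fin C)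
    (hfx : f x = a) (hab : a ≠ b) (j : Fin C) :
    (univ.filter fun i => Function.update f x b i = j).card =
      if j = a then (univ.filter fun i => f i = j).card - 1
      else if j = b then (univ.filter fun i => f i = j).card + 1
      else (univ.filter fun i => f i = j).card := by
  have hba : b ≠ a := Ne.symm hab
  by_cases hja : j = a
  · have hset : (univ.filter fun i => Function.update f x b i = j) =
        (univ.filter fun i => f i = j).erase x := by
      ext i
      by_cases hix : i = x <;>
        simp [Function.update, hix, hfx, hja, hba]
    rw [hset, card_erase_of_mem (by simp [hja, hfx])]
    simp [hja]
  · by_cases hjb : j = b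
    · have hset : (univ.filter fun i => Function.update f x b i = j) =
          insert x (univ.filter fun i => f i = j) := by
        ext i
        by_cases hix : i = x <;> simp [Function.update, hix, hjb]
      rw [hset, card_insert_of_notMem (by simp [hjb, hfx]; exact hab)]
      simp [hja, hjb, hba]
    · have hset : (univ.filter fun i => Function.update f x b i = j) =
          (univ.filter fun i => f i = j) := by
        ext i
        by_cases hix : i = x <;>
          simp [Function.update, hix, hfx, Ne.symm hja, Ne.symm hjb]
      rw [hset]
      simp [hja, hjb]

private lemma fib_step (N C : ℕ) (a b : Fin C) (hab : a ≠ b) (k : Fin C → ℕ) (u v : ℕ) :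
    (fib N C (Function.update (Function.update k a (u+1)) b v)).card * (u+1)
      = (fib N C (Function.update (Function.update k a u) b (v+1))).card * (v+1) := by
  classical
  set k₁ := Function.update (Function.update k a (u+1)) b v with hk₁
  set k₂ := Function.update (Function.update k a u) b (v+1) with hk₂
  have hk₁a : k₁ a = u + 1 := by simp [hk₁, Function.update, hab]
  have hk₁b : k₁ b = v := by simp [hk₁, Function.update]
  have hk₂a : k₂ a = u := by simp [hk₂, Function.update, hab]
  have hk₂b : k₂ b = v + 1 := by simp [hk₂, Function.update]
  have hk₁o : ∀ j, j ≠ a → j ≠ b → k₁ j = k j := by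
    intro j hja hjb; simp [hk₁, Function.update, hja, hjb]
  have hk₂o : ∀ j, j ≠ a → j ≠ b → k₂ j = k j := by
    intro j hja hjb; simp [hk₂, Function.update, hja, hjb]
  have hT₁ : ((fib N C k₁).sigma fun f => univ.filter fun i => f i = a).card
      = (fib N C k₁).card * (u + 1) := by
    rw [card_sigma]
    rw [Finset.sum_congr rfl (fun f hf => by
      have := (mem_filter.mp hf).2 a
      rw [this, hk₁a])]
    simp [mul_comm]
  have hT₂ : ((fib N C k₂).sigma fun f => univ.filter fun i => f i = b).card
      = (fib N C k₂).card * (v + 1) := by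
    rw [card_sigma]
    rw [Finset.sum_congr rfl (fun f hf => by
      have := (mem_filter.mp hf).2 b
      rw [this, hk₂b])]
    simp [mul_comm]
  rw [← hT₁, ← hT₂]
  -- bijection
  refine Finset.card_bij' (fun p _ => ⟨Function.update p.1 p.2 b, p.2⟩)
    (fun p _ => ⟨Function.update p.1 p.2 a, p.2⟩) ?_ ?_ ?_ ?_
  · rintro ⟨f, x⟩ hp
    rw [mem_sigma] at hp
    obtain ⟨hf, hx⟩ := hp
    have hfx : f x = a := (mem_filter.mp hx).2
    have hfib := (mem_filter.mp hf).2
    rw [mem_sigma]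
    constructor
    · rw [fib, mem_filter]
      refine ⟨mem_univ _, fun j => ?_⟩
      rw [card_filter_update f x a b hfx hab j]
      by_cases hja : j = a
      · rw [hja]; simp [hfib a, hk₁a, hk₂a]
      · by_cases hjb : j = b
        · rw [hjb]; simp [Ne.symm hab, hfib b, hk₁b, hk₂b]
        · simp [hja, hjb, hfib j, hk₁o j hja hjb, hk₂o j hja hjb]
    · simp [Function.update]
  · rintro ⟨f, x⟩ hp
    rw [mem_sigma] at hp
    obtain ⟨hf, hx⟩ := hp
    have hfx : f x = b := (mem_filter.mp hx).2
    have hfib := (mem_filter.mp hf).2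
    rw [mem_sigma]
    constructor
    · rw [fib, mem_filter]
      refine ⟨mem_univ _, fun j => ?_⟩
      rw [card_filter_update f x b a hfx hab.symm j]
      by_cases hjb : j = b
      · rw [hjb]; simp [hab, hfib b, hk₁b, hk₂b]
      · by_cases hja : j = a
        · rw [hja]; simp [hja ▸ hjb, hfib a, hk₁a, hk₂a]
        · simp [hja, hjb, hfib j, hk₁o j hja hjb, hk₂o j hja hjb]
    · simp [Function.update]
  · rintro ⟨f, x⟩ hp
    rw [mem_sigma] at hp
    have hfx : f x = a := (mem_filter.mp hp.2).2
    simp [Function.update_idem, ← hfx]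
  · rintro ⟨f, x⟩ hp
    rw [mem_sigma] at hp
    have hfx : f x = b := (mem_filter.mp hp.2).2
    simp [Function.update_idem, ← hfx]

private lemma fib_le (N C m : ℕ) (d : ℕ) (k : Fin C → ℕ)
    (hd : ∑ j, Nat.dist (k j) m ≤ d) (hsum : ∑ j, k j = C * m) :
    (fib N C k).card ≤ (fib N C (fun _ => m)).card := by
  classical
  induction d generalizing k with
  | zero =>
    have hall : ∀ j, k j = m := by
      intro j
      have h0 : Nat.dist (k j) m = 0 := by
        have := Finset.sum_le_sum_of_subset (Finset.subset_univ {j})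
          (f := fun j => Nat.dist (k j) m)
        simp at this
        omega
      exact Nat.eq_of_dist_eq_zero h0
    have : k = fun _ => m := funext hall
    rw [this]
  | succ d ih =>
    by_cases hall : ∀ j, k j = m
    · have : k = fun _ => m := funext hall
      rw [this]
    · push_neg at hall
      obtain ⟨j₀, hj₀⟩ := hall
      have hCm : ∑ _j : Fin C, m = C * m := by simp [mul_comm]
      have ha : ∃ a, m < k a := by
        by_contra h
        push_neg at h
        have : ∑ j, k j < ∑ _j : Fin C, m :=
          Finset.sum_lt_sum (fun j _ => h j) ⟨j₀, mem_univ _, lt_of_le_of_ne (h j₀) hj₀⟩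
        omega
      have hb : ∃ b, k b < m := by
        by_contra h
        push_neg at h
        by_cases hj : m < k j₀
        · have : ∑ _j : Fin C, m < ∑ j, k j :=
            Finset.sum_lt_sum (fun j _ => h j) ⟨j₀, mem_univ _, hj⟩
          omega
        · exact hj₀ (le_antisymm (not_lt.mp hj) (h j₀))
      obtain ⟨a, haa⟩ := ha
      obtain ⟨b, hbb⟩ := hb
      have hab : a ≠ b := by rintro rfl; omega
      set u := k a - 1 with hu
      set v := k b with hv
      have hu1 : u + 1 = k a := by omega
      set k' := Function.update (Function.update k a u) b (v+1) with hk'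
      have hkeq : k = Function.update (Function.update k a (u+1)) b v := by
        rw [hu1, hv, Function.update_eq_self]
        rw [Function.update_eq_self]
      have hk'a : k' a = u := by simp [hk', Function.update, hab]
      have hk'b : k' b = v + 1 := by simp [hk', Function.update]
      have hk'o : ∀ j, j ≠ a → j ≠ b → k' j = k j := by
        intro j hja hjb; simp [hk', Function.update, hja, hjb]
      -- step inequality
      have hstep : (fib N C k).card * (u+1) = (fib N C k').card * (v+1) := by
        rw [hkeq] at *
        exact fib_step N C a b hab k u v
      have hle : (fib N C k).card ≤ (fib N C k').card := by
        have hvu : v + 1 ≤ u + 1 := by omega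
        have := Nat.mul_le_mul_left (fib N C k).card hvu
        rw [hstep] at this
        exact Nat.le_of_mul_le_mul_right this (Nat.succ_pos v)
      -- sums
      have hsum' : ∑ j, k' j = C * m := by
        rw [hk']
        rw [Finset.sum_update_of_mem (mem_univ b)]
        rw [Finset.sum_update_of_mem (by simp [hab] : a ∈ univ \ {b})]
        have : ∑ j, k j = k b + (k a + ∑ j ∈ (univ \ {b}) \ {a}, k j) := by
          rw [← Finset.sum_update_of_mem (by simp [hab] : a ∈ univ \ {b}),
            Function.update_eq_self, ← Finset.sum_update_of_mem (mem_univ b),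
            Function.update_eq_self]
        omega
      -- measure
      have hmeas : ∑ j, Nat.dist (k' j) m < ∑ j, Nat.dist (k j) m := by
        apply Finset.sum_lt_sum
        · intro j _
          by_cases hja : j = a
          · subst hja; rw [hk'a]; simp [Nat.dist]; omega
          · by_cases hjb : j = b
            · subst hjb; rw [hk'b]; simp [Nat.dist]; omega
            · rw [hk'o j hja hjb]
        · exact ⟨a, mem_univ _, by rw [hk'a]; simp [Nat.dist]; omega⟩
      exact hle.trans (ih k' (by omega) hsum')

private lemma claimA (N C : ℕ) (hdvd : C ∣ N) :
    C ^ N ≤ (N + 1) ^ C * (fib N C (fun _ => N / C)).card := by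
  classical
  have hcount : ∀ (f : Fin N → Fin C) (j : Fin C),
      (univ.filter fun i => f i = j).card ≤ N := fun f j =>
    le_trans (card_filter_le _ _) (by simp)
  set cnt : (Fin N → Fin C) → (Fin C → Fin (N+1)) :=
    fun f j => ⟨(univ.filter fun i => f i = j).card, Nat.lt_succ_of_le (hcount f j)⟩ with hcnt
  have h1 : (univ : Finset (Fin N → Fin C)).card =
      ∑ k : Fin C → Fin (N+1),
        ((univ : Finset (Fin N → Fin C)).filter fun f => cnt f = k).card :=
    Finset.card_eq_sum_card_fiberwise (fun f _ => mem_univ _)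
  have h2 : ∀ k : Fin C → Fin (N+1),
      ((univ : Finset (Fin N → Fin C)).filter fun f => cnt f = k).card ≤
        (fib N C (fun _ => N / C)).card := by
    intro k
    by_cases hne : ((univ : Finset (Fin N → Fin C)).filter fun f => cnt f = k).Nonempty
    · obtain ⟨f₀, hf₀⟩ := hne
      have hcntf₀ : cnt f₀ = k := (mem_filter.mp hf₀).2
      have hfibsum : ∀ f : Fin N → Fin C,
          ∑ j : Fin C, (univ.filter fun i => f i = j).card = N := by
        intro f
        have := Finset.card_eq_sum_card_fiberwise
          (s := (univ : Finset (Fin N))) (t := (univ : Finset (Fin C)))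
          (f := f) (fun i _ => mem_univ _)
        simpa using this.symm
      have hsum : ∑ j, (k j : ℕ) = C * (N / C) := by
        have heq : ∑ j, ((k j : ℕ)) = ∑ j, (univ.filter fun i => f₀ i = j).card :=
          Finset.sum_congr rfl fun j _ => by rw [← hcntf₀]
        rw [Nat.mul_div_cancel' hdvd, heq, hfibsum f₀]
      have hsub : ((univ : Finset (Fin N → Fin C)).filter fun f => cnt f = k) ⊆
          fib N C (fun j => (k j : ℕ)) := by
        intro f hf
        have hcf : cnt f = k := (mem_filter.mp hf).2
        rw [fib, mem_filter]
        refine ⟨mem_univ _, fun j => ?_⟩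
        rw [← hcf]
      exact le_trans (card_le_card hsub)
        (fib_le N C (N / C) (∑ j, Nat.dist ((k j : ℕ)) (N / C)) _ le_rfl hsum)
    · rw [not_nonempty_iff_eq_empty.mp hne]
      simp
  calc C ^ N = (univ : Finset (Fin N → Fin C)).card := by
        simp [card_univ]
    _ = ∑ k : Fin C → Fin (N+1),
        ((univ : Finset (Fin N → Fin C)).filter fun f => cnt f = k).card := h1
    _ ≤ ∑ _k : Fin C → Fin (N+1), (fib N C (fun _ => N / C)).card :=
        Finset.sum_le_sum fun k _ => h2 k
    _ = (N + 1) ^ C * (fib N C (fun _ => N / C)).card := by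
        simp [card_univ, mul_comm]

theorem balanced_colorings_restriction_count (N C : ℕ) (hN : 0 < N) (hC : 0 < C)
    (hdvd : C ∣ N) (S : Finset (Fin N)) :
    C ^ S.card ≤
      ((Finset.univ.filter fun x : Fin N → Fin C =>
          ∀ j : Fin C, (Finset.univ.filter fun i => x i = j).card = N / C).image
        (fun x => fun i : S => x i)).card * (N + 1) ^ C := by
  classical
  set B := (Finset.univ.filter fun x : Fin N → Fin C =>
      ∀ j : Fin C, (Finset.univ.filter fun i => x i = j).card = N / C) with hB
  set R := B.image (fun x => fun i : S => x i) with hR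
  have hBfib : B = fib N C (fun _ => N / C) := rfl
  have hA : C ^ N ≤ (N + 1) ^ C * B.card := by
    rw [hBfib]; exact claimA N C hdvd
  -- Claim B
  have hSc : S.card ≤ N := by
    have := Finset.card_le_univ S
    simpa using this
  have hBle : B.card ≤ R.card * C ^ (N - S.card) := by
    have hinj : Set.InjOn
        (fun x : Fin N → Fin C => ((fun i : S => x i, fun i : (Sᶜ : Finset (Fin N)) => x i) :
          (S → Fin C) × ((Sᶜ : Finset (Fin N)) → Fin C))) B := by
      intro x _ y _ hxy
      have h1 := congrArg Prod.fst hxy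
      have h2 := congrArg Prod.snd hxy
      funext i
      by_cases hi : i ∈ S
      · exact congrFun h1 ⟨i, hi⟩
      · exact congrFun h2 ⟨i, by simpa using hi⟩
    have hmaps : ∀ x ∈ B, ((fun i : S => x i, fun i : (Sᶜ : Finset (Fin N)) => x i) :
          (S → Fin C) × ((Sᶜ : Finset (Fin N)) → Fin C)) ∈
        R ×ˢ (univ : Finset ((Sᶜ : Finset (Fin N)) → Fin C)) := by
      intro x hx
      rw [mem_product]
      exact ⟨mem_image_of_mem _ hx, mem_univ _⟩
    have := Finset.card_le_card_of_injOn _ hmaps hinj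
    rw [card_product, card_univ] at this
    have hcardfun : Fintype.card ((Sᶜ : Finset (Fin N)) → Fin C) = C ^ (N - S.card) := by
      rw [Fintype.card_fun, Fintype.card_coe, card_compl, Fintype.card_fin, Fintype.card_fin]
    rw [hcardfun] at this
    exact this
  have hpow : C ^ S.card * C ^ (N - S.card) = C ^ N := by
    rw [← pow_add]
    congr 1
    omega
  have key : C ^ S.card * C ^ (N - S.card) ≤ (R.card * (N + 1) ^ C) * C ^ (N - S.card) := by
    rw [hpow]
    calc C ^ N ≤ (N + 1) ^ C * B.card := hA
      _ ≤ (N + 1) ^ C * (R.card * C ^ (N - S.card)) := Nat.mul_le_mul_left _ hBle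
      _ = (R.card * (N + 1) ^ C) * C ^ (N - S.card) := by ring
  exact Nat.le_of_mul_le_mul_right key (Nat.pow_pos hC)
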